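/- Let w = w[1]⋯w[n] ∈ {0,1,2}^* with k = |w|_2 occurrences of the symbol 2, and let x = w^r. Then (T_{w[n]} ∘ ⋯ ∘ T_{w[1]}) applied to the vector |p0,0⟩ + |p1,0⟩ − |p2,0⟩ equals |p0,0⟩ + |p1,−k⟩ − |p2,−k⟩ + Σ_{i=1}^{n} (−1)^{x[i]} ( −(1/2)|p3,i−k⟩ + (1/2)|p4,i−k⟩ ), where (−1)^{x[i]} is +1 if x[i] ∈ {0,2} and −1 if x[i] = 1. -/

import Mathlib

/-- The five affine states `p0, …, p4`. -/
inductive St : Type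
  | p0 | p1 | p2 | p3 | p4
  deriving DecidableEq

/-- The real vector space of finitely supported functions from `St × ℤ` to `ℝ`. -/
abbrev V : Type := (St × ℤ) →₀ ℝ

/-- The basis vector `|p,c⟩`. -/
noncomputable def ket (p : St) (c : ℤ) : V := Finsupp.single (p, c) 1

/-- Action of `T_0` on basis vectors. -/
noncomputable def img0 : St × ℤ → V
  | (.p0, c) => ket .p0 c
  | (.p1, c) => ket .p1 c - (1 / 2 : ℝ) • ket .p3 (c + 1) + (1 / 2 : ℝ) • ket .p4 (c + 1)
  | (.p2, c) => ket .p2 c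
  | (.p3, c) => ket .p3 (c + 1)
  | (.p4, c) => ket .p4 (c + 1)

/-- Action of `T_1` on basis vectors. -/
noncomputable def img1 : St × ℤ → V
  | (.p0, c) => ket .p0 c
  | (.p1, c) => ket .p1 c + (1 / 2 : ℝ) • ket .p3 (c + 1) - (1 / 2 : ℝ) • ket .p4 (c + 1)
  | (.p2, c) => ket .p2 c
  | (.p3, c) => ket .p3 (c + 1)
  | (.p4, c) => ket .p4 (c + 1)

/-- Action of `T_2` on basis vectors. -/
noncomputable def img2 : St × ℤ → V
  | (.p0, c) => ket .p0 c
  | (.p1, c) => ket .p1 (c - 1) - (1 / 2 : ℝ) • ket .p3 c + (1 / 2 : ℝ) • ket .p4 c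
  | (.p2, c) => ket .p2 (c - 1)
  | (.p3, c) => ket .p3 c
  | (.p4, c) => ket .p4 c

/-- Action of the end-marker map `T_$` on basis vectors. -/
noncomputable def imgD : St × ℤ → V
  | (.p0, c) => if c = 0 then (1 / 2 : ℝ) • ket .p3 0 + (1 / 2 : ℝ) • ket .p4 0 else ket .p0 c
  | (.p1, c) => ket .p1 c
  | (.p2, c) => ket .p1 c
  | (.p3, c) => ket .p3 c
  | (.p4, c) => if c = 0 then ket .p4 0 else ket .p3 c

/-- The linear map `T_0`. -/
noncomputable def T0 : V →ₗ[ℝ] V :=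
  Finsupp.lsum ℝ fun pc => LinearMap.toSpanSingleton ℝ V (img0 pc)

/-- The linear map `T_1`. -/
noncomputable def T1 : V →ₗ[ℝ] V :=
  Finsupp.lsum ℝ fun pc => LinearMap.toSpanSingleton ℝ V (img1 pc)

/-- The linear map `T_2`. -/
noncomputable def T2 : V →ₗ[ℝ] V :=
  Finsupp.lsum ℝ fun pc => LinearMap.toSpanSingleton ℝ V (img2 pc)

/-- The end-marker linear map `T_$`. -/
noncomputable def TD : V →ₗ[ℝ] V :=
  Finsupp.lsum ℝ fun pc => LinearMap.toSpanSingleton ℝ V (imgD pc)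

/-- The transition map associated to an input symbol in `{0,1,2}`. -/
noncomputable def Tsym (σ : Fin 3) : V →ₗ[ℝ] V :=
  if σ = 0 then T0 else if σ = 1 then T1 else T2

/-- `run w v = (T_{w[n]} ∘ ⋯ ∘ T_{w[1]}) v`. -/
noncomputable def run (w : List (Fin 3)) (v : V) : V :=
  w.foldl (fun v σ => Tsym σ v) v


lemma T0_ket (p : St) (c : ℤ) : T0 (ket p c) = img0 (p, c) := by
  simp [T0, ket, Finsupp.lsum_single, LinearMap.toSpanSingleton_apply_one]

lemma T1_ket (p : St) (c : ℤ) : T1 (ket p c) = img1 (p, c) := by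
  simp [T1, ket, Finsupp.lsum_single, LinearMap.toSpanSingleton_apply_one]

lemma T2_ket (p : St) (c : ℤ) : T2 (ket p c) = img2 (p, c) := by
  simp [T2, ket, Finsupp.lsum_single, LinearMap.toSpanSingleton_apply_one]

theorem stmt_12 (w : List (Fin 3)) :
    run w (ket .p0 0 + ket .p1 0 - ket .p2 0) =
      ket .p0 0 + ket .p1 (-(w.count 2 : ℤ)) - ket .p2 (-(w.count 2 : ℤ)) +
        ∑ i ∈ Finset.range w.length,
          (if w.reverse.getD i 0 = 1 then (-1 : ℝ) else 1) •
            ((-(1 / 2 : ℝ)) • ket .p3 ((i : ℤ) + 1 - (w.count 2 : ℤ)) +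
              (1 / 2 : ℝ) • ket .p4 ((i : ℤ) + 1 - (w.count 2 : ℤ))) := by
  induction w using List.reverseRecOn with
  | nil => simp [run]
  | append_singleton w σ ih =>
    have hrun : run (w ++ [σ]) (ket .p0 0 + ket .p1 0 - ket .p2 0)
        = Tsym σ (run w (ket .p0 0 + ket .p1 0 - ket .p2 0)) := by
      simp [run, List.foldl_append]
    rw [hrun, ih]
    simp only [List.count_append, List.length_append, List.reverse_append,
      List.reverse_singleton, List.singleton_append, List.count_singleton,
      List.count_nil, List.count_cons, List.length_singleton]
    rw [Finset.sum_range_succ']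
    simp only [List.getD_cons_succ, List.getD_cons_zero]
    have hs : σ = 0 ∨ σ = 1 ∨ σ = 2 := by fin_cases σ <;> decide
    rcases hs with rfl | rfl | rfl <;>
      simp only [Tsym, Fin.reduceEq, reduceIte, beq_iff_eq, beq_self_eq_true,
        if_true, if_false, map_add, map_sub, map_smul, map_sum,
        T0_ket, T1_ket, T2_ket, img0, img1, img2] <;>
      push_cast <;> ring_nf <;>
      module
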